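/- Let n ≥ 6 be an integer and let 0 ≤ r₁ ≤ r₂ ≤ ⋯ ≤ rₙ be integers such that (r₁,r₂,r₃,r₄) is one of: (0,0,0,i) with 0 ≤ i ≤ 2; (0,0,1,i) with 1 ≤ i ≤ 3; (0,1,1,i) with 1 ≤ i ≤ 2; or (0,1,2,i) with 2 ≤ i ≤ 3, and suppose r₄ + 2 ≤ rₙ. Then ∑_{r₄+2 ≤ t ≤ rₙ, l(t−1) odd} δ(t)·2^{d(t)−3/2} + ∑_{r₄+2 ≤ t ≤ rₙ, l(t−1) even} δ(t)·2^{d(t)−1} ≤ 2^{−1} + 2^{−2} + ⋯ + 2^{r₄ − rₙ + 1}. Furthermore, when (r₁,r₂,r₃,r₄) = (0,0,0,2) or (0,0,1,3), the left-hand side is at most 2^{−2} + 2^{−3} + ⋯ + 2^{r₄ − rₙ}. -/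

import Mathlib

/-- `l(t) = #{i : r i < t and r i − t is odd}`. -/
noncomputable def lfun (n : ℕ) (r : Fin n → ℤ) (t : ℤ) : ℕ :=
  {i : Fin n | r i < t ∧ Odd (r i - t)}.ncard

/-- `d(t) = t + (1/2) ∑_{i : r i < t − 1} (r i − t + 1)`. -/
noncomputable def dfun (n : ℕ) (r : Fin n → ℤ) (t : ℤ) : ℝ :=
  (t : ℝ) + (1 / 2) * ∑ i : Fin n, if r i < t - 1 then ((r i : ℝ) - (t : ℝ) + 1) else 0

/-- `δ(t) = 0` if `r i = t − 1` for some `i`, and `1` otherwise. -/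
noncomputable def deltafun (n : ℕ) (r : Fin n → ℤ) (t : ℤ) : ℝ :=
  if ∃ i : Fin n, r i = t - 1 then 0 else 1

/-- The middle sum `∑_{a ≤ t ≤ b, l(t−1) odd} δ(t) 2^{d(t)−3/2}
  + ∑_{a ≤ t ≤ b, l(t−1) even} δ(t) 2^{d(t)−1}`. -/
noncomputable def middleSum (n : ℕ) (r : Fin n → ℤ) (a b : ℤ) : ℝ :=
  (∑ t ∈ Finset.Icc a b, if Odd (lfun n r (t - 1)) then
      deltafun n r t * (2 : ℝ) ^ (dfun n r t - 3 / 2) else 0) +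
  (∑ t ∈ Finset.Icc a b, if Even (lfun n r (t - 1)) then
      deltafun n r t * (2 : ℝ) ^ (dfun n r t - 1) else 0)


open Finset

private lemma geo_reindex (a b k : ℤ) :
    ∑ t ∈ Finset.Icc a b, (2:ℝ)^((k:ℝ) - (t:ℝ)) =
      ∑ s ∈ Finset.Icc (a - k) (b - k), (2:ℝ)^(-(s:ℝ)) := by
  rw [show Finset.Icc a b = Finset.map (addLeftEmbedding k) (Finset.Icc (a-k) (b-k)) by
    rw [Finset.map_add_left_Icc]; congr 1 <;> omega, Finset.sum_map]
  apply Finset.sum_congr rfl; intro s _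
  simp only [addLeftEmbedding_apply]
  push_cast
  ring_nf

private lemma dfun_bound (n : ℕ) (hn : 5 < n) (r : Fin n → ℤ) (hmono : Monotone r) (t : ℤ)
    (ht : r ⟨3, by omega⟩ + 2 ≤ t) :
    dfun n r t ≤ ((r ⟨0, by omega⟩ + r ⟨1, by omega⟩ + r ⟨2, by omega⟩
        + r ⟨3, by omega⟩ : ℤ) : ℝ) / 2 + 2 - t
      - ((univ.filter (fun i : Fin n => ¬ (i : ℕ) < 4 ∧ r i < t - 1)).card : ℝ) / 2 := by
  classical
  have h3 : ∀ i : Fin n, (i : ℕ) < 4 → r i < t - 1 := by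
    intro i hi
    have : r i ≤ r ⟨3, by omega⟩ := hmono (by simp [Fin.le_def]; omega)
    omega
  have hA : univ.filter (fun i : Fin n => (i:ℕ) < 4)
      = ({⟨0, by omega⟩, ⟨1, by omega⟩, ⟨2, by omega⟩, ⟨3, by omega⟩} : Finset (Fin n)) := by
    ext i
    simp only [Finset.mem_filter, Finset.mem_univ, true_and, Finset.mem_insert,
      Finset.mem_singleton, Fin.ext_iff]
    omega
  have hsum : (∑ i : Fin n, if r i < t - 1 then ((r i : ℝ) - t + 1) else 0)
      ≤ ∑ i : Fin n, (if (i:ℕ) < 4 then ((r i : ℝ) - t + 1) else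
          if r i < t - 1 then (-1:ℝ) else 0) := by
    apply Finset.sum_le_sum
    intro i _
    by_cases hi : (i:ℕ) < 4
    · simp [hi, h3 i hi]
    · simp only [hi, if_false]
      by_cases hr : r i < t - 1
      · simp only [hr, if_true]
        have : (r i : ℝ) ≤ (t:ℝ) - 2 := by exact_mod_cast (by omega : r i ≤ t - 2)
        linarith
      · simp [hr]
  have hAsum : ∑ i ∈ univ.filter (fun i : Fin n => (i:ℕ) < 4),
      (if (i:ℕ) < 4 then ((r i : ℝ) - t + 1) else if r i < t - 1 then (-1:ℝ) else 0)
      = ((r ⟨0, by omega⟩ + r ⟨1, by omega⟩ + r ⟨2, by omega⟩ + r ⟨3, by omega⟩ : ℤ) : ℝ)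
        - 4*t + 4 := by
    rw [Finset.sum_congr rfl (fun i hi => by
      simp only [Finset.mem_filter] at hi
      rw [if_pos hi.2])]
    rw [hA]
    rw [Finset.sum_insert (by simp [Fin.ext_iff]), Finset.sum_insert (by simp [Fin.ext_iff]),
      Finset.sum_insert (by simp [Fin.ext_iff]), Finset.sum_singleton]
    push_cast
    ring
  have hBsum : ∑ i ∈ univ.filter (fun i : Fin n => ¬ (i:ℕ) < 4),
      (if (i:ℕ) < 4 then ((r i : ℝ) - t + 1) else if r i < t - 1 then (-1:ℝ) else 0)
      = -(((univ.filter (fun i : Fin n => ¬ (i : ℕ) < 4 ∧ r i < t - 1)).card : ℝ)) := by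
    rw [Finset.sum_congr rfl (fun i hi => by
      simp only [Finset.mem_filter] at hi
      rw [if_neg hi.2])]
    rw [Finset.sum_ite, Finset.sum_const, Finset.sum_const_zero, Finset.filter_filter]
    simp
  have hsplit : (∑ i : Fin n, (if (i:ℕ) < 4 then ((r i : ℝ) - t + 1) else
          if r i < t - 1 then (-1:ℝ) else 0))
      = ((r ⟨0, by omega⟩ + r ⟨1, by omega⟩ + r ⟨2, by omega⟩ + r ⟨3, by omega⟩ : ℤ) : ℝ)
        - 4*t + 4
        - ((univ.filter (fun i : Fin n => ¬ (i : ℕ) < 4 ∧ r i < t - 1)).card : ℝ) := by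
    rw [← Finset.sum_filter_add_sum_filter_not univ (fun i : Fin n => (i:ℕ) < 4), hAsum, hBsum]
    ring
  unfold dfun
  linarith

private lemma card_aux (n : ℕ) (hn : 5 < n) (r : Fin n → ℤ) (u : ℤ) :
    (({⟨0, by omega⟩, ⟨1, by omega⟩, ⟨2, by omega⟩, ⟨3, by omega⟩} : Finset (Fin n)).filter
      (fun i => Odd (r i - u))).card
    = (if Odd (r (⟨0, by omega⟩ : Fin n) - u) then 1 else 0)
      + ((if Odd (r (⟨1, by omega⟩ : Fin n) - u) then 1 else 0)
      + ((if Odd (r (⟨2, by omega⟩ : Fin n) - u) then 1 else 0)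
      + (if Odd (r (⟨3, by omega⟩ : Fin n) - u) then 1 else 0))) := by
  rw [Finset.card_filter]
  rw [Finset.sum_insert (by simp [Fin.ext_iff]), Finset.sum_insert (by simp [Fin.ext_iff]),
    Finset.sum_insert (by simp [Fin.ext_iff]), Finset.sum_singleton]

set_option maxHeartbeats 1000000 in
private lemma lfun_odd (n : ℕ) (hn : 5 < n) (r : Fin n → ℤ) (hmono : Monotone r) (t : ℤ)
    (ht : r ⟨3, by omega⟩ + 2 ≤ t)
    (hvals : (r ⟨0, by omega⟩ = 0 ∧ r ⟨1, by omega⟩ = 1 ∧ r ⟨2, by omega⟩ = 1 ∧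
        r ⟨3, by omega⟩ = 1) ∨
      (r ⟨0, by omega⟩ = 0 ∧ r ⟨1, by omega⟩ = 1 ∧ r ⟨2, by omega⟩ = 2 ∧
        r ⟨3, by omega⟩ = 2))
    (hm : (univ.filter (fun i : Fin n => ¬ (i : ℕ) < 4 ∧ r i < t - 1)).card = 0) :
    Odd (lfun n r (t - 1)) := by
  classical
  have h3 : ∀ i : Fin n, (i : ℕ) < 4 → r i < t - 1 := by
    intro i hi
    have : r i ≤ r ⟨3, by omega⟩ := hmono (by simp [Fin.le_def]; omega)
    omega
  have hempty : ∀ i : Fin n, r i < t - 1 → (i:ℕ) < 4 := by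
    intro i hri
    by_contra hi
    rw [Finset.card_eq_zero] at hm
    have : i ∈ univ.filter (fun i : Fin n => ¬ (i : ℕ) < 4 ∧ r i < t - 1) :=
      Finset.mem_filter.mpr ⟨Finset.mem_univ i, hi, hri⟩
    rw [hm] at this
    exact absurd this (Finset.notMem_empty i)
  have hl : lfun n r (t-1)
      = (univ.filter (fun i : Fin n => r i < t - 1 ∧ Odd (r i - (t-1)))).card := by
    unfold lfun
    rw [show {i : Fin n | r i < t - 1 ∧ Odd (r i - (t-1))}
        = ↑(univ.filter fun i : Fin n => r i < t - 1 ∧ Odd (r i - (t-1))) by ext; simp,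
      Set.ncard_coe_finset]
  have hset : univ.filter (fun i : Fin n => r i < t - 1 ∧ Odd (r i - (t-1)))
      = ({⟨0, by omega⟩, ⟨1, by omega⟩, ⟨2, by omega⟩, ⟨3, by omega⟩} : Finset (Fin n)).filter
          (fun i => Odd (r i - (t-1))) := by
    ext i
    simp only [Finset.mem_filter, Finset.mem_univ, true_and, Finset.mem_insert,
      Finset.mem_singleton, Fin.ext_iff]
    constructor
    · rintro ⟨h1, h2⟩
      exact ⟨by have := hempty i h1; omega, h2⟩
    · rintro ⟨h1, h2⟩
      exact ⟨h3 i (by omega), h2⟩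
  have hcard : lfun n r (t-1)
      = (if Odd (r (⟨0, by omega⟩ : Fin n) - (t-1)) then 1 else 0)
        + ((if Odd (r (⟨1, by omega⟩ : Fin n) - (t-1)) then 1 else 0)
        + ((if Odd (r (⟨2, by omega⟩ : Fin n) - (t-1)) then 1 else 0)
        + (if Odd (r (⟨3, by omega⟩ : Fin n) - (t-1)) then 1 else 0))) := by
    rw [hl, hset, card_aux n hn r (t-1)]
  rcases hvals with ⟨h0, h1, h2, h4⟩ | ⟨h0, h1, h2, h4⟩
  · rw [hcard, h0, h1, h2, h4]
    by_cases hq : Odd ((1:ℤ) - (t-1))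
    · have h0' : ¬ Odd ((0:ℤ) - (t-1)) := by simp only [Int.odd_iff] at hq ⊢; omega
      rw [if_neg h0', if_pos hq]
      decide
    · have h0' : Odd ((0:ℤ) - (t-1)) := by simp only [Int.odd_iff] at hq ⊢; omega
      rw [if_pos h0', if_neg hq]
      decide
  · rw [hcard, h0, h1, h2, h4]
    by_cases hq : Odd ((0:ℤ) - (t-1))
    · have h1' : ¬ Odd ((1:ℤ) - (t-1)) := by simp only [Int.odd_iff] at hq ⊢; omega
      have h2' : Odd ((2:ℤ) - (t-1)) := by simp only [Int.odd_iff] at hq ⊢; omega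
      rw [if_pos hq, if_neg h1', if_pos h2']
      decide
    · have h1' : Odd ((1:ℤ) - (t-1)) := by simp only [Int.odd_iff] at hq ⊢; omega
      have h2' : ¬ Odd ((2:ℤ) - (t-1)) := by simp only [Int.odd_iff] at hq ⊢; omega
      rw [if_neg hq, if_pos h1', if_neg h2']
      decide

private lemma middle_le (n : ℕ) (hn : 5 < n) (r : Fin n → ℤ) (hmono : Monotone r)
    (a b c s0 s1 s2 s3 lo hi : ℤ)
    (ha : a = r ⟨3, by omega⟩ + 2)
    (hs0 : s0 = r ⟨0, by omega⟩) (hs1 : s1 = r ⟨1, by omega⟩)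
    (hs2 : s2 = r ⟨2, by omega⟩) (hs3 : s3 = r ⟨3, by omega⟩)
    (hlo : lo = a - c) (hhi : hi = b - c)
    (hc : s0 + s1 + s2 + s3 ≤ 2*c - 2 ∨
      (s0 + s1 + s2 + s3 = 2*c - 1 ∧
        ((s0 = 0 ∧ s1 = 1 ∧ s2 = 1 ∧ s3 = 1) ∨ (s0 = 0 ∧ s1 = 1 ∧ s2 = 2 ∧ s3 = 2)))) :
    middleSum n r a b ≤ ∑ s ∈ Finset.Icc lo hi, (2:ℝ)^(-(s:ℝ)) := by
  classical
  subst ha hlo hhi hs0 hs1 hs2 hs3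
  rw [← geo_reindex]
  rw [middleSum, ← Finset.sum_add_distrib]
  apply Finset.sum_le_sum
  intro t ht
  have ht2 : r ⟨3, by omega⟩ + 2 ≤ t := (Finset.mem_Icc.mp ht).1
  have hδ : deltafun n r t = 0 ∨ deltafun n r t = 1 := by unfold deltafun; split <;> simp
  have hpow : ∀ x : ℝ, x ≤ (c:ℝ) - (t:ℝ) → (2:ℝ)^x ≤ (2:ℝ)^((c:ℝ) - (t:ℝ)) :=
    fun x h => Real.rpow_le_rpow_of_exponent_le one_le_two h
  have hd := dfun_bound n hn r hmono t ht2
  generalize hmdef : (univ.filter (fun i : Fin n => ¬ (i : ℕ) < 4 ∧ r i < t - 1)).card = m at hd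
  have hm0 : (0:ℝ) ≤ (m:ℝ) := by positivity
  have hSub : ((r ⟨0, by omega⟩ + r ⟨1, by omega⟩ + r ⟨2, by omega⟩
      + r ⟨3, by omega⟩ : ℤ) : ℝ) ≤ 2*(c:ℝ) - 1 := by
    rcases hc with h | ⟨h, _⟩
    · exact_mod_cast le_trans h (by omega)
    · exact_mod_cast le_of_eq h
  rcases Nat.even_or_odd (lfun n r (t-1)) with hpar | hpar
  · rw [if_neg (Nat.not_odd_iff_even.mpr hpar), if_pos hpar, zero_add]
    rcases hδ with h | h
    · rw [h, zero_mul]; positivity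
    · rw [h, one_mul]
      apply hpow
      rcases hc with hS | ⟨hS, hbad⟩
      · have hSr : ((r ⟨0, by omega⟩ + r ⟨1, by omega⟩ + r ⟨2, by omega⟩
            + r ⟨3, by omega⟩ : ℤ) : ℝ) ≤ 2*(c:ℝ) - 2 := by exact_mod_cast hS
        linarith
      · have hm1 : 1 ≤ m := by
          by_contra h1
          have hm' : m = 0 := by omega
          exact (Nat.not_odd_iff_even.mpr hpar)
            (lfun_odd n hn r hmono t ht2 hbad (hmdef.trans hm'))
        have hm1r : (1:ℝ) ≤ (m:ℝ) := by exact_mod_cast hm1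
        linarith
  · rw [if_pos hpar, if_neg (Nat.not_even_iff_odd.mpr hpar), add_zero]
    rcases hδ with h | h
    · rw [h, zero_mul]; positivity
    · rw [h, one_mul]
      apply hpow
      linarith

set_option maxHeartbeats 1000000 in
/-- Lemma 3.10 (Lemma `lemma5` of the paper): bound on the middle range of the local
density sum at p = 2 for the admissible quadruples (r₁,r₂,r₃,r₄). -/
theorem middle_sum_bound (n : ℕ) (hn : 6 ≤ n) (r : Fin n → ℤ)
    (h0 : 0 ≤ r ⟨0, by omega⟩) (hmono : Monotone r)
    (hcases :
      (r ⟨0, by omega⟩ = 0 ∧ r ⟨1, by omega⟩ = 0 ∧ r ⟨2, by omega⟩ = 0 ∧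
        0 ≤ r ⟨3, by omega⟩ ∧ r ⟨3, by omega⟩ ≤ 2) ∨
      (r ⟨0, by omega⟩ = 0 ∧ r ⟨1, by omega⟩ = 0 ∧ r ⟨2, by omega⟩ = 1 ∧
        1 ≤ r ⟨3, by omega⟩ ∧ r ⟨3, by omega⟩ ≤ 3) ∨
      (r ⟨0, by omega⟩ = 0 ∧ r ⟨1, by omega⟩ = 1 ∧ r ⟨2, by omega⟩ = 1 ∧
        1 ≤ r ⟨3, by omega⟩ ∧ r ⟨3, by omega⟩ ≤ 2) ∨
      (r ⟨0, by omega⟩ = 0 ∧ r ⟨1, by omega⟩ = 1 ∧ r ⟨2, by omega⟩ = 2 ∧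
        2 ≤ r ⟨3, by omega⟩ ∧ r ⟨3, by omega⟩ ≤ 3))
    (hgap : r ⟨3, by omega⟩ + 2 ≤ r ⟨n - 1, by omega⟩) :
    middleSum n r (r ⟨3, by omega⟩ + 2) (r ⟨n - 1, by omega⟩) ≤
      ∑ s ∈ Finset.Icc (1 : ℤ) (r ⟨n - 1, by omega⟩ - r ⟨3, by omega⟩ - 1),
        (2 : ℝ) ^ (-(s : ℝ)) ∧
    ((r ⟨0, by omega⟩ = 0 ∧ r ⟨1, by omega⟩ = 0 ∧ r ⟨2, by omega⟩ = 0 ∧ r ⟨3, by omega⟩ = 2) ∨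
     (r ⟨0, by omega⟩ = 0 ∧ r ⟨1, by omega⟩ = 0 ∧ r ⟨2, by omega⟩ = 1 ∧ r ⟨3, by omega⟩ = 3) →
      middleSum n r (r ⟨3, by omega⟩ + 2) (r ⟨n - 1, by omega⟩) ≤
        ∑ s ∈ Finset.Icc (2 : ℤ) (r ⟨n - 1, by omega⟩ - r ⟨3, by omega⟩),
          (2 : ℝ) ^ (-(s : ℝ))) := by
  constructor
  · exact middle_le n hn r hmono _ _ (r ⟨3, by omega⟩ + 1) (r ⟨0, by omega⟩)
      (r ⟨1, by omega⟩) (r ⟨2, by omega⟩) (r ⟨3, by omega⟩) _ _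
      (by omega) (by omega) (by omega) (by omega) (by omega) (by omega) (by omega) (by omega)
  · intro hsp
    exact middle_le n hn r hmono _ _ (r ⟨3, by omega⟩) (r ⟨0, by omega⟩)
      (r ⟨1, by omega⟩) (r ⟨2, by omega⟩) (r ⟨3, by omega⟩) _ _
      (by omega) (by omega) (by omega) (by omega) (by omega) (by omega) (by omega) (by omega)
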